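/- arXiv:1209.4975 — 9 statements merged into one kernel-verified Lean document; each statement's English description precedes it below -/
import Mathlib

section
/- The family I_X = {I ⊆ U : R̲(I) ⊆ X} satisfies the matroid exchange axiom: if I₁, I₂ ∈ I_X and |I₁| < |I₂|, then there exists u ∈ I₂ \ I₁ such that I₁ ∪ {u} ∈ I_X. -/
open Finset

variable {α : Type*} [Fintype α] [DecidableEq α]

/-- The lower approximation of `S` w.r.t. the equivalence relation `R`:
`{x : [x]_R ⊆ S}`. -/
def lowerApprox (R : Setoid α) [DecidableRel R.r] (S : Finset α) : Finset α :=
  Finset.univ.filter fun x => ∀ y, R.r x y → y ∈ S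

theorem parametric_family_exchange (R : Setoid α) [DecidableRel R.r] (X : Finset α)
    (I₁ I₂ : Finset α) (h₁ : lowerApprox R I₁ ⊆ X) (h₂ : lowerApprox R I₂ ⊆ X)
    (hcard : I₁.card < I₂.card) :
    ∃ u ∈ I₂ \ I₁, lowerApprox R (insert u I₁) ⊆ X := by
  by_contra hcon
  push_neg at hcon
  have key : ∀ u ∈ I₂ \ I₁, ∃ y ∈ I₁ \ I₂, R.r u y ∧ ∀ z, R.r u z → z ∈ insert u I₁ := by
    intro u hu
    obtain ⟨hu2, hu1⟩ := Finset.mem_sdiff.mp hu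
    obtain ⟨x, hxla, hxX⟩ := Finset.not_subset.mp (hcon u hu)
    simp only [lowerApprox, Finset.mem_filter, Finset.mem_univ, true_and] at hxla
    have hux : R.r x u := by
      by_contra h
      apply hxX
      apply h₁
      simp only [lowerApprox, Finset.mem_filter, Finset.mem_univ, true_and]
      intro y hy
      rcases Finset.mem_insert.mp (hxla y hy) with rfl | h'
      · exact absurd hy h
      · exact h'
    have hnot : ¬ ∀ y, R.r x y → y ∈ I₂ := by
      intro hall
      apply hxX
      apply h₂
      simp only [lowerApprox, Finset.mem_filter, Finset.mem_univ, true_and]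
      exact hall
    push_neg at hnot
    obtain ⟨y, hxy, hy2⟩ := hnot
    refine ⟨y, Finset.mem_sdiff.mpr ⟨?_, hy2⟩, R.trans (R.symm hux) hxy,
      fun z hz => hxla z (R.trans hux hz)⟩
    rcases Finset.mem_insert.mp (hxla y hxy) with rfl | h'
    · exact absurd hu2 hy2
    · exact h'
  choose! f hf hfr hfc using key
  have hinj : Set.InjOn f ↑(I₂ \ I₁) := by
    intro u hu v hv hfe
    have hu' : u ∈ I₂ \ I₁ := Finset.mem_coe.mp hu
    have hv' : v ∈ I₂ \ I₁ := Finset.mem_coe.mp hv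
    have huv : R.r u v := R.trans (hfr u hu') (R.symm (hfe ▸ hfr v hv'))
    rcases Finset.mem_insert.mp (hfc u hu' v huv) with h | h
    · exact h.symm
    · exact absurd h (Finset.mem_sdiff.mp hv').2
  have hle : (I₂ \ I₁).card ≤ (I₁ \ I₂).card :=
    Finset.card_le_card_of_injOn f (fun u hu => hf u hu) hinj
  have e1 : (I₂ \ I₁).card + (I₂ ∩ I₁).card = I₂.card :=
    Finset.card_sdiff_add_card_inter I₂ I₁
  have e2 : (I₁ \ I₂).card + (I₁ ∩ I₂).card = I₁.card :=
    Finset.card_sdiff_add_card_inter I₁ I₂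
  rw [Finset.inter_comm] at e1
  omega
end

section
/- The family I_X = {I ⊆ U : R̲(I) ⊆ X} is the independent-set family of a matroid on U (it satisfies the nonempty, hereditary, and exchange axioms). -/
open Finset

variable {α : Type*} [Fintype α] [DecidableEq α]

theorem parametric_family_is_matroid (R : Setoid α) [DecidableRel R.r] (X : Finset α) :
    (lowerApprox R (∅ : Finset α) ⊆ X) ∧
    (∀ I I' : Finset α, lowerApprox R I ⊆ X → I' ⊆ I → lowerApprox R I' ⊆ X) ∧
    (∀ I₁ I₂ : Finset α, lowerApprox R I₁ ⊆ X → lowerApprox R I₂ ⊆ X →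
      I₁.card < I₂.card → ∃ u ∈ I₂ \ I₁, lowerApprox R (insert u I₁) ⊆ X) := by
  refine ⟨?_, ?_, ?_⟩
  · intro x hx
    simp only [lowerApprox, mem_filter] at hx
    exact absurd (hx.2 x (R.refl x)) (notMem_empty x)
  · intro I I' hI hsub x hx
    simp only [lowerApprox, mem_filter] at hx ⊢
    exact hI (by
      simp only [lowerApprox, mem_filter]
      exact ⟨mem_univ x, fun y hy => hsub (hx.2 y hy)⟩)
  · intro I₁ I₂ h₁ h₂ hlt
    by_contra hcon
    push_neg at hcon
    have key : ∀ u ∈ I₂ \ I₁, ∃ z, z ∈ I₁ \ I₂ ∧ R.r u z ∧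
        (∀ y, R.r u y → y ∈ insert u I₁) := by
      intro u hu
      obtain ⟨hu2, hu1⟩ := mem_sdiff.mp hu
      obtain ⟨x, hx, hxX⟩ := not_subset.mp (hcon u hu)
      simp only [lowerApprox, mem_filter] at hx
      have hx' := hx.2
      have hxu : R.r x u := by
        by_contra hc
        apply hxX
        apply h₁
        simp only [lowerApprox, mem_filter]
        refine ⟨mem_univ x, fun y hy => ?_⟩
        rcases mem_insert.mp (hx' y hy) with rfl | hyI
        · exact absurd hy hc
        · exact hyI
      have hclass : ∀ y, R.r u y → y ∈ insert u I₁ :=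
        fun y hy => hx' y (R.trans hxu hy)
      have hnotsub : ¬ (∀ y, R.r x y → y ∈ I₂) := by
        intro hall
        exact hxX (h₂ (by simp only [lowerApprox, mem_filter]; exact ⟨mem_univ x, hall⟩))
      push_neg at hnotsub
      obtain ⟨z, hz, hz2⟩ := hnotsub
      have hzmem : z ∈ insert u I₁ := hx' z hz
      have hzu : z ≠ u := fun h => hz2 (h ▸ hu2)
      have hzI1 : z ∈ I₁ := (mem_insert.mp hzmem).resolve_left hzu
      exact ⟨z, mem_sdiff.mpr ⟨hzI1, hz2⟩, R.trans (R.symm hxu) hz, hclass⟩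
    choose! f hmem hR hP using key
    have inj : Set.InjOn f ↑(I₂ \ I₁) := by
      intro a ha' b hb' hab
      have ha : a ∈ I₂ \ I₁ := mem_coe.mp ha'
      have hb : b ∈ I₂ \ I₁ := mem_coe.mp hb'
      by_contra hne
      have hRab : R.r a b := R.trans (hR a ha) (hab ▸ R.symm (hR b hb))
      have hb' : b ∈ insert a I₁ := hP a ha b hRab
      rcases mem_insert.mp hb' with rfl | hbI
      · exact hne rfl
      · exact (mem_sdiff.mp hb).2 hbI
    have hcard : (I₂ \ I₁).card ≤ (I₁ \ I₂).card :=
      Finset.card_le_card_of_injOn f (fun u hu => hmem u hu) inj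
    have e2 : (I₂ \ I₁).card + (I₂ ∩ I₁).card = I₂.card :=
      Finset.card_sdiff_add_card_inter I₂ I₁
    have e1 : (I₁ \ I₂).card + (I₁ ∩ I₂).card = I₁.card :=
      Finset.card_sdiff_add_card_inter I₁ I₂
    have : (I₂ ∩ I₁).card = (I₁ ∩ I₂).card := by rw [inter_comm]
    omega
end

section
/- For any I ⊆ U, R̲(I) ⊆ X if and only if R̲(I \ R̲(X)) = ∅. Hence {I ⊆ U : R̲(I) ⊆ X} = {I ⊆ U : R̲(I \ R̲(X)) = ∅}. -/
open Finset

variable {α : Type*} [Fintype α] [DecidableEq α]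

lemma mem_lowerApprox {R : Setoid α} [DecidableRel R.r] {S : Finset α} {x : α} :
    x ∈ lowerApprox R S ↔ ∀ y, R.r x y → y ∈ S := by
  simp [lowerApprox]

theorem parametric_family_third_form (R : Setoid α) [DecidableRel R.r] (X : Finset α) :
    ∀ I : Finset α, lowerApprox R I ⊆ X ↔ lowerApprox R (I \ lowerApprox R X) = ∅ := by
  intro I
  constructor
  · intro h
    rw [Finset.eq_empty_iff_forall_notMem]
    intro x hx
    rw [mem_lowerApprox] at hx
    have hxI : ∀ y, R.r x y → y ∈ I := fun y hy => (Finset.mem_sdiff.mp (hx y hy)).1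
    have hxX : x ∈ lowerApprox R X := by
      rw [mem_lowerApprox]
      intro y hy
      exact h (mem_lowerApprox.mpr fun z hz => hxI z (R.trans hy hz))
    exact (Finset.mem_sdiff.mp (hx x (R.refl x))).2 hxX
  · intro h x hx
    rw [mem_lowerApprox] at hx
    have : x ∉ lowerApprox R (I \ lowerApprox R X) := by simp [h]
    rw [mem_lowerApprox] at this
    push_neg at this
    obtain ⟨y, hxy, hy⟩ := this
    rw [Finset.mem_sdiff] at hy
    push_neg at hy
    have := hy (hx y hxy)
    rw [mem_lowerApprox] at this
    exact this x (R.symm hxy)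
end

section
/- {I ⊆ U : R̲(I) ⊆ X} = {I ⊆ U : for every equivalence class P of R with P ⊄ R̲(X), |P ∩ I| ≤ |P| − 1}. -/
open Finset

variable {α : Type*} [Fintype α] [DecidableEq α]

/-- The equivalence class of `x` w.r.t. `R`, as a finset. -/
def cls (R : Setoid α) [DecidableRel R.r] (x : α) : Finset α :=
  Finset.univ.filter fun y => R.r x y

theorem parametric_family_fourth_form (R : Setoid α) [DecidableRel R.r] (X : Finset α) :
    ∀ I : Finset α, lowerApprox R I ⊆ X ↔
      ∀ x : α, ¬ cls R x ⊆ lowerApprox R X → (cls R x ∩ I).card ≤ (cls R x).card - 1 := by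
  have mem_cls : ∀ x y, y ∈ cls R x ↔ R.r x y := by
    intro x y; simp [cls]
  have mem_la : ∀ (S : Finset α) x, x ∈ lowerApprox R S ↔ cls R x ⊆ S := by
    intro S x
    simp only [lowerApprox, mem_filter, mem_univ, true_and]
    constructor
    · intro h y hy; exact h y ((mem_cls x y).1 hy)
    · intro h y hxy; exact h ((mem_cls x y).2 hxy)
  have card_iff : ∀ (x : α) (I : Finset α),
      (cls R x ∩ I).card ≤ (cls R x).card - 1 ↔ ¬ cls R x ⊆ I := by
    intro x I
    have hx : x ∈ cls R x := (mem_cls x x).2 (R.refl x)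
    have hpos : 1 ≤ (cls R x).card := card_pos.2 ⟨x, hx⟩
    constructor
    · intro h hsub
      have : cls R x ∩ I = cls R x := inter_eq_left.2 hsub
      rw [this] at h
      omega
    · intro h
      have hss : cls R x ∩ I ⊂ cls R x :=
        Finset.ssubset_iff_subset_ne.2 ⟨inter_subset_left, fun he => h (by
          rw [← he]; exact inter_subset_right)⟩
      have := card_lt_card hss
      omega
  intro I
  constructor
  · intro h x hncls
    rw [card_iff]
    intro hsub
    apply hncls
    have hclsX : cls R x ⊆ X := by
      intro y hy
      apply h
      rw [mem_la]
      intro z hz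
      apply hsub
      exact (mem_cls x z).2 (R.trans ((mem_cls x y).1 hy) ((mem_cls y z).1 hz))
    intro y hy
    rw [mem_la]
    intro z hz
    apply hclsX
    exact (mem_cls x z).2 (R.trans ((mem_cls x y).1 hy) ((mem_cls y z).1 hz))
  · intro h x hxI
    rw [mem_la] at hxI
    by_contra hxX
    have := h x
    rw [card_iff] at this
    have hncls : ¬ cls R x ⊆ lowerApprox R X := by
      intro hc
      have := hc ((mem_cls x x).2 (R.refl x))
      rw [mem_la] at this
      exact hxX (this ((mem_cls x x).2 (R.refl x)))
    exact this hncls hxI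
end

section
/- If X₁ ⊆ R̲(X), X₂ ⊆ U \ R̲(X), and R̲(X₁) = ∅, then R̲(X₁ ∪ X₂) = R̲(X₂). -/
open Finset

variable {α : Type*} [Fintype α] [DecidableEq α]

theorem lower_union_eq_of_lower_empty (R : Setoid α) [DecidableRel R.r] (X : Finset α)
    (X₁ X₂ : Finset α) (h₁ : X₁ ⊆ lowerApprox R X) (h₂ : X₂ ⊆ Finset.univ \ lowerApprox R X)
    (h : lowerApprox R X₁ = ∅) :
    lowerApprox R (X₁ ∪ X₂) = lowerApprox R X₂ := by
  ext x
  simp only [lowerApprox, mem_filter, mem_univ, true_and, mem_union]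
  constructor
  · intro hx y hxy
    rcases hx y hxy with hy1 | hy2
    · exfalso
      have hyX : y ∈ lowerApprox R X := h₁ hy1
      simp only [lowerApprox, mem_filter, mem_univ, true_and] at hyX
      have : y ∉ lowerApprox R X₁ := by simp [h]
      simp only [lowerApprox, mem_filter, mem_univ, true_and, not_forall] at this
      obtain ⟨z, hyz, hz1⟩ := this
      have hz2 : z ∈ X₂ := by
        rcases hx z (R.trans hxy hyz) with h' | h'
        · exact absurd h' hz1
        · exact h'
      have := h₂ hz2
      simp only [mem_sdiff, mem_univ, true_and, lowerApprox, mem_filter, not_forall] at this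
      obtain ⟨w, hzw, hw⟩ := this
      exact hw (hyX w (R.trans hyz hzw))
    · exact hy2
  · intro hx y hxy
    exact Or.inr (hx y hxy)
end

section
/- The parametric matroid M_X (with independent sets {I ⊆ U : R̲(I) ⊆ X}) is the direct sum of the partition-circuit matroid on U \ R̲(X) induced by the restriction of R, and the free matroid on R̲(X). Equivalently, I_X = {I₁ ∪ I₂ : I₁ ⊆ U \ R̲(X) with R̲(I₁) = ∅, and I₂ ⊆ R̲(X)}. -/
open Finset

variable {α : Type*} [Fintype α] [DecidableEq α]

theorem parametric_matroid_direct_sum_decomposition (R : Setoid α) [DecidableRel R.r]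
    (X : Finset α) :
    ∀ I : Finset α, lowerApprox R I ⊆ X ↔
      ∃ I₁ I₂ : Finset α, I₁ ⊆ Finset.univ \ lowerApprox R X ∧ lowerApprox R I₁ = ∅ ∧
        I₂ ⊆ lowerApprox R X ∧ I = I₁ ∪ I₂ := by
  intro I
  constructor
  · intro h
    refine ⟨I \ lowerApprox R X, I ∩ lowerApprox R X, fun x hx => ?_, ?_, inter_subset_right, ?_⟩
    · simp only [mem_sdiff] at hx ⊢
      exact ⟨mem_univ x, hx.2⟩
    · ext x
      simp only [mem_lowerApprox, Finset.notMem_empty, iff_false, not_forall]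
      by_contra hc
      push_neg at hc
      have hx1 : x ∈ I \ lowerApprox R X := hc x (R.refl x)
      have hxI : x ∉ lowerApprox R X := (mem_sdiff.mp hx1).2
      apply hxI
      rw [mem_lowerApprox]
      intro y hxy
      apply h
      rw [mem_lowerApprox]
      intro z hyz
      exact (mem_sdiff.mp (hc z (R.trans hxy hyz))).1
    · ext x
      simp only [mem_union, mem_sdiff, mem_inter]
      tauto
  · rintro ⟨I₁, I₂, h1, h2, h3, rfl⟩
    intro x hx
    rw [mem_lowerApprox] at hx
    by_cases hcase : ∃ y, R.r x y ∧ y ∈ I₂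
    · obtain ⟨y, hxy, hy2⟩ := hcase
      have := mem_lowerApprox.mp (h3 hy2)
      exact this x (R.symm hxy)
    · push_neg at hcase
      exfalso
      have : x ∈ lowerApprox R I₁ := by
        rw [mem_lowerApprox]
        intro y hxy
        rcases mem_union.mp (hx y hxy) with h | h
        · exact h
        · exact absurd h (hcase y hxy)
      rw [h2] at this
      exact Finset.notMem_empty x this
end

section
/- The circuits of the parametric matroid M_X are exactly the equivalence classes P of R with P ⊆ U \ R̲(X). -/
open Finset

variable {α : Type*} [Fintype α] [DecidableEq α]

lemma mem_cls {R : Setoid α} [DecidableRel R.r] {x y : α} :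
    y ∈ cls R x ↔ R.r x y := by
  simp [cls]

theorem circuits_of_parametric_matroid (R : Setoid α) [DecidableRel R.r] (X : Finset α) :
    ∀ C : Finset α,
      (¬ lowerApprox R C ⊆ X ∧ ∀ D : Finset α, D ⊂ C → lowerApprox R D ⊆ X) ↔
      ∃ x : α, C = cls R x ∧ C ⊆ Finset.univ \ lowerApprox R X := by
  intro C
  constructor
  · rintro ⟨hdep, hmin⟩
    obtain ⟨z, hzC, hzX⟩ := not_subset.mp hdep
    rw [mem_lowerApprox] at hzC
    have hclsC : cls R z ⊆ C := fun y hy => hzC y (mem_cls.mp hy)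
    have hCeq : C = cls R z := by
      by_contra hne
      have : cls R z ⊂ C := ⟨hclsC, fun h => hne (subset_antisymm h hclsC)⟩
      have := hmin (cls R z) this
      exact hzX (this (mem_lowerApprox.mpr fun y hy => mem_cls.mpr hy))
    refine ⟨z, hCeq, fun y hy => ?_⟩
    rw [mem_sdiff]
    refine ⟨mem_univ y, fun hyX => ?_⟩
    rw [mem_lowerApprox] at hyX
    rw [hCeq, mem_cls] at hy
    exact hzX (hyX z (R.trans (R.symm hy) (R.refl z)))
  · rintro ⟨x, rfl, hsub⟩
    have hx : x ∈ cls R x := mem_cls.mpr (R.refl x)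
    have hxn := hsub hx
    rw [mem_sdiff, mem_lowerApprox] at hxn
    push_neg at hxn
    obtain ⟨z, hxz, hzX⟩ := hxn.2
    constructor
    · intro h
      have : z ∈ lowerApprox R (cls R x) := mem_lowerApprox.mpr
        (fun y hy => mem_cls.mpr (R.trans hxz hy))
      exact hzX (h this)
    · intro D hD y hy
      rw [mem_lowerApprox] at hy
      have hyC : y ∈ cls R x := hD.subset (hy y (R.refl y))
      rw [mem_cls] at hyC
      have : cls R x ⊆ D := fun w hw => hy w (R.trans (R.symm hyC) (mem_cls.mp hw))
      exact absurd (subset_antisymm hD.subset this) hD.ne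
end

section
/- For the parametric matroid M_X, the rank function satisfies r_{M_X}(Y) = |Y| − f_R(Y \ R̲(X)) for all Y ⊆ U. -/
open Finset

variable {α : Type*} [Fintype α] [DecidableEq α]

/-- The lower approximation number: the number of equivalence classes of `R`
contained in `S`. -/
def lowerNum (R : Setoid α) [DecidableRel R.r] (S : Finset α) : ℕ :=
  ((Finset.univ.image (cls R)).filter fun P => P ⊆ S).card


open Classical in
/-- The rank of `X` w.r.t. an independence family `𝓘`: the maximum cardinality
of a member of `𝓘` contained in `X`. -/
noncomputable def rank (𝓘 : Finset α → Prop) (X : Finset α) : ℕ :=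
  (X.powerset.filter fun I => 𝓘 I).sup Finset.card

theorem rank_of_parametric_matroid (R : Setoid α) [DecidableRel R.r] (X : Finset α) :
    ∀ Y : Finset α,
      rank (fun I => lowerApprox R I ⊆ X) Y = Y.card - lowerNum R (Y \ lowerApprox R X) := by
  classical
  intro Y
  set T : Finset α := Y \ lowerApprox R X with hTdef
  set Ps : Finset (Finset α) := (Finset.univ.image (cls R)).filter (fun P => P ⊆ T) with hPs
  have hnum : lowerNum R (Y \ lowerApprox R X) = Ps.card := rfl
  have hmemcls : ∀ x : α, x ∈ cls R x := fun x => by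
    simp only [cls, Finset.mem_filter, Finset.mem_univ, true_and]
    exact R.refl x
  have hclseq : ∀ x y, R.r x y → cls R x = cls R y := by
    intro x y h
    ext z
    simp only [cls, Finset.mem_filter, Finset.mem_univ, true_and]
    exact ⟨fun hz => R.trans (R.symm h) hz, fun hz => R.trans h hz⟩
  have hmemcls' : ∀ x y, y ∈ cls R x ↔ R.r x y := by
    intro x y; simp [cls]
  have hlow : ∀ (S : Finset α) x, x ∈ lowerApprox R S ↔ cls R x ⊆ S := by
    intro S x
    simp [lowerApprox, Finset.subset_iff, hmemcls']
  rw [hnum]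
  apply le_antisymm
  · -- upper bound
    apply Finset.sup_le
    intro I hI
    simp only [Finset.mem_filter, Finset.mem_powerset] at hI
    obtain ⟨hIY, hind⟩ := hI
    have hsurj : Set.SurjOn (cls R) ((Y \ I : Finset α) : Set α) (Ps : Set (Finset α)) := by
      intro P hP
      simp only [hPs, Finset.coe_filter, Finset.mem_image, Finset.mem_univ, true_and,
        Set.mem_setOf_eq] at hP
      obtain ⟨⟨x, rfl⟩, hPT⟩ := hP
      -- cls R x is not contained in I
      have hnotsub : ¬ (cls R x ⊆ I) := by
        intro hsub
        -- x ∈ T, so x ∉ lowerApprox R X, so ∃ z ∈ cls R x, z ∉ X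
        have hxT : x ∈ T := hPT (hmemcls x)
        rw [hTdef, Finset.mem_sdiff] at hxT
        obtain ⟨_, hxn⟩ := hxT
        rw [hlow] at hxn
        obtain ⟨z, hz, hzn⟩ := Finset.not_subset.mp hxn
        apply hzn
        apply hind
        rw [hlow, ← hclseq x z ((hmemcls' x z).mp hz)]
        exact hsub
      obtain ⟨y, hy, hyn⟩ := Finset.not_subset.mp hnotsub
      refine ⟨y, ?_, ?_⟩
      · have hyY : y ∈ Y := by
          have := hPT hy
          rw [hTdef, Finset.mem_sdiff] at this
          exact this.1
        simp [hyY, hyn]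
      · exact (hclseq x y ((hmemcls' x y).mp hy)).symm
    have hcard : Ps.card ≤ (Y \ I).card := Finset.card_le_card_of_surjOn _ hsurj
    have h1 : (Y \ I).card = Y.card - I.card := Finset.card_sdiff_of_subset hIY
    have h2 : I.card ≤ Y.card := Finset.card_le_card hIY
    omega
  · -- lower bound
    rcases isEmpty_or_nonempty α with hα | hα
    · have hY : Y = ∅ := Finset.eq_empty_of_isEmpty Y
      simp [hY]
    · have _inst : Inhabited α := Classical.inhabited_of_nonempty hα
      set rep : Finset α → α := fun P => if hp : P.Nonempty then hp.choose else default
        with hrepdef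
      have hrep : ∀ P ∈ Ps, rep P ∈ P := by
        intro P hP
        simp only [hPs, Finset.mem_filter, Finset.mem_image, Finset.mem_univ, true_and] at hP
        obtain ⟨⟨x, rfl⟩, _⟩ := hP
        have hne : (cls R x).Nonempty := ⟨x, hmemcls x⟩
        simp only [hrepdef, dif_pos hne]
        exact hne.choose_spec
      set D : Finset α := Ps.image rep with hDdef
      have hDT : D ⊆ T := by
        intro d hd
        rw [hDdef, Finset.mem_image] at hd
        obtain ⟨P, hP, rfl⟩ := hd
        have hPT : P ⊆ T := by
          simp only [hPs, Finset.mem_filter] at hP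
          exact hP.2
        exact hPT (hrep P hP)
      have hTY : T ⊆ Y := Finset.sdiff_subset
      have hDY : D ⊆ Y := hDT.trans hTY
      set I : Finset α := Y \ D with hIdef
      have hIY : I ⊆ Y := Finset.sdiff_subset
      have hind : lowerApprox R I ⊆ X := by
        intro x hx
        rw [hlow] at hx
        by_contra hxX
        have hsubT : cls R x ⊆ T := by
          intro y hy
          have hyI : y ∈ I := hx hy
          have hyY : y ∈ Y := hIY hyI
          rw [hTdef, Finset.mem_sdiff]
          refine ⟨hyY, ?_⟩
          rw [hlow]
          intro hsub
          apply hxX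
          apply hsub
          rw [← hclseq x y ((hmemcls' x y).mp hy)]
          exact hmemcls x
        have hPsmem : cls R x ∈ Ps := by
          simp only [hPs, Finset.mem_filter, Finset.mem_image, Finset.mem_univ, true_and]
          exact ⟨⟨x, rfl⟩, hsubT⟩
        have hrepD : rep (cls R x) ∈ D := by
          rw [hDdef]
          exact Finset.mem_image_of_mem rep hPsmem
        have hrepI : rep (cls R x) ∈ I := hx (hrep _ hPsmem)
        rw [hIdef, Finset.mem_sdiff] at hrepI
        exact hrepI.2 hrepD
      have hle : I.card ≤ rank (fun I => lowerApprox R I ⊆ X) Y := by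
        apply Finset.le_sup
        simp only [Finset.mem_filter, Finset.mem_powerset]
        exact ⟨hIY, hind⟩
      have h1 : I.card = Y.card - D.card := Finset.card_sdiff_of_subset hDY
      have h2 : D.card ≤ Ps.card := Finset.card_image_le
      omega
end

section
/- For the parametric matroid M_X, the closure operator satisfies cl(Y) = Y ∪ {y ∈ U \ Y : f_R((Y ∪ {y}) \ R̲(X)) − f_R(Y \ R̲(X)) = 1} for all Y ⊆ U. -/
open Finset

variable {α : Type*} [Fintype α] [DecidableEq α]

section Helpers

variable (R : Setoid α) [DecidableRel R.r]

lemma mem_cls_self (x : α) : x ∈ cls R x := by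
  simp only [cls, Finset.mem_filter, Finset.mem_univ, true_and]
  exact R.refl x

lemma cls_eq_of_mem {x y : α} (h : y ∈ cls R x) : cls R x = cls R y := by
  simp only [cls, Finset.mem_filter, Finset.mem_univ, true_and] at h
  ext z
  simp only [cls, Finset.mem_filter, Finset.mem_univ, true_and]
  exact ⟨fun hz => R.trans (R.symm h) hz, fun hz => R.trans h hz⟩

lemma mem_lowerApprox_iff {x : α} {S : Finset α} :
    x ∈ lowerApprox R S ↔ cls R x ⊆ S := by
  simp [lowerApprox, cls, Finset.subset_iff]

/-- Distinct classes are disjoint: classes sharing an element are equal. -/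
lemma cls_eq_of_common {P Q : Finset α} (hP : ∃ x, cls R x = P) (hQ : ∃ x, cls R x = Q)
    {c : α} (hcP : c ∈ P) (hcQ : c ∈ Q) : P = Q := by
  obtain ⟨p, rfl⟩ := hP
  obtain ⟨q, rfl⟩ := hQ
  rw [cls_eq_of_mem R hcP, cls_eq_of_mem R hcQ]

lemma lowerNum_le_card (S : Finset α) : lowerNum R S ≤ S.card := by
  classical
  have : ((Finset.univ.image (cls R)).filter fun P => P ⊆ S).card ≤ (S.image some).card := by
    apply Finset.card_le_card_of_injOn
      (fun P => if h : P.Nonempty then some h.choose else none)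
    · intro P hP
      simp only [Finset.mem_coe, Finset.mem_filter, Finset.mem_image, Finset.mem_univ, true_and] at hP
      obtain ⟨⟨x, rfl⟩, hsub⟩ := hP
      have hne : (cls R x).Nonempty := ⟨x, mem_cls_self R x⟩
      simp only [dif_pos hne]
      exact Finset.mem_image.2 ⟨_, hsub hne.choose_spec, rfl⟩
    · intro P hP Q hQ hfe
      simp only [Finset.coe_filter, Set.mem_setOf_eq, Finset.mem_image, Finset.mem_univ,
        true_and] at hP hQ
      have hPne : P.Nonempty := by obtain ⟨⟨x, rfl⟩, _⟩ := hP; exact ⟨x, mem_cls_self R x⟩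
      have hQne : Q.Nonempty := by obtain ⟨⟨x, rfl⟩, _⟩ := hQ; exact ⟨x, mem_cls_self R x⟩
      simp only [dif_pos hPne, dif_pos hQne, Option.some.injEq] at hfe
      exact cls_eq_of_common R hP.1 hQ.1 hPne.choose_spec (hfe ▸ hQne.choose_spec)
  calc lowerNum R S ≤ (S.image some).card := this
    _ ≤ S.card := Finset.card_image_le

lemma lowerNum_mono {S T : Finset α} (h : S ⊆ T) : lowerNum R S ≤ lowerNum R T := by
  apply Finset.card_le_card
  intro P hP
  rw [Finset.mem_filter] at hP ⊢
  exact ⟨hP.1, hP.2.trans h⟩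

lemma lowerNum_insert_le (u : α) (S : Finset α) :
    lowerNum R (insert u S) ≤ lowerNum R S + 1 := by
  classical
  have hsub : ((Finset.univ.image (cls R)).filter fun P => P ⊆ insert u S)
      ⊆ insert (cls R u) ((Finset.univ.image (cls R)).filter fun P => P ⊆ S) := by
    intro P hP
    simp only [Finset.mem_filter, Finset.mem_image, Finset.mem_univ, true_and] at hP
    obtain ⟨⟨x, rfl⟩, hsub⟩ := hP
    by_cases hu : u ∈ cls R x
    · exact Finset.mem_insert.2 (Or.inl (cls_eq_of_mem R hu))
    · refine Finset.mem_insert.2 (Or.inr ?_)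
      simp only [Finset.mem_filter, Finset.mem_image, Finset.mem_univ, true_and]
      refine ⟨⟨x, rfl⟩, fun z hz => ?_⟩
      rcases Finset.mem_insert.1 (hsub hz) with rfl | hzS
      · exact absurd hz hu
      · exact hzS
  calc lowerNum R (insert u S) ≤ _ := Finset.card_le_card hsub
    _ ≤ lowerNum R S + 1 := Finset.card_insert_le _ _

open Classical in
lemma rank_eq (X Y : Finset α) :
    rank (fun I => lowerApprox R I ⊆ X) Y = Y.card - lowerNum R (Y \ lowerApprox R X) := by
  classical
  set L := lowerApprox R X with hL
  set bad := (Finset.univ.image (cls R)).filter (fun P => P ⊆ Y \ L) with hbad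
  have hnum : lowerNum R (Y \ L) = bad.card := rfl
  have hform : ∀ P ∈ bad, ∃ x, cls R x = P := by
    intro P hP
    simp only [hbad, Finset.mem_filter, Finset.mem_image, Finset.mem_univ, true_and] at hP
    exact hP.1
  have hsubYL : ∀ P ∈ bad, P ⊆ Y \ L := by
    intro P hP
    simp only [hbad, Finset.mem_filter] at hP
    exact hP.2
  have hPne : ∀ P ∈ bad, P.Nonempty := by
    intro P hP
    obtain ⟨x, rfl⟩ := hform P hP
    exact ⟨x, mem_cls_self R x⟩
  rw [hnum]
  apply le_antisymm
  · -- upper bound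
    apply Finset.sup_le
    intro I hI
    simp only [Finset.mem_filter, Finset.mem_powerset] at hI
    obtain ⟨hIY, hind⟩ := hI
    -- each bad class misses an element of I
    have hmiss : ∀ P ∈ bad, (P \ I).Nonempty := by
      intro P hP
      rw [Finset.sdiff_nonempty]
      intro hPI
      obtain ⟨x, rfl⟩ := hform P hP
      have hX : cls R x ⊆ X := by
        intro z hz
        have hz' : cls R z ⊆ I := (cls_eq_of_mem R hz) ▸ hPI
        exact hind ((mem_lowerApprox_iff R).2 hz')
      have hx := hsubYL _ hP (mem_cls_self R x)
      exact (Finset.mem_sdiff.1 hx).2 ((mem_lowerApprox_iff R).2 hX)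
    have hcard : bad.card ≤ ((Y \ I).image some).card := by
      apply Finset.card_le_card_of_injOn
        (fun P => if h : (P \ I).Nonempty then some h.choose else none)
      · intro P hP
        have h := hmiss P hP
        simp only [dif_pos h]
        refine Finset.mem_image.2 ⟨_, ?_, rfl⟩
        have := h.choose_spec
        rw [Finset.mem_sdiff] at this ⊢
        exact ⟨(Finset.mem_sdiff.1 (hsubYL P hP this.1)).1, this.2⟩
      · intro P hP Q hQ hfe
        simp only [Finset.mem_coe] at hP hQ
        have hPn := hmiss P hP
        have hQn := hmiss Q hQ
        simp only [dif_pos hPn, dif_pos hQn, Option.some.injEq] at hfe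
        exact cls_eq_of_common R (hform P hP) (hform Q hQ)
          (Finset.mem_sdiff.1 hPn.choose_spec).1
          (hfe ▸ (Finset.mem_sdiff.1 hQn.choose_spec).1)
    have h1 : ((Y \ I).image some).card ≤ (Y \ I).card := Finset.card_image_le
    have h2 : (Y \ I).card + I.card = Y.card := Finset.card_sdiff_add_card_eq_card hIY
    omega
  · -- existence: Y minus one element of each bad class
    set D := bad.attach.image (fun P => (hPne P.1 P.2).choose) with hD
    have hDmem : ∀ P (h : P ∈ bad), (hPne P h).choose ∈ D := by
      intro P h
      exact Finset.mem_image.2 ⟨⟨P, h⟩, Finset.mem_attach _ _, rfl⟩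
    have hDsub : D ⊆ Y \ L := by
      intro d hd
      obtain ⟨⟨P, hP⟩, _, rfl⟩ := Finset.mem_image.1 hd
      exact hsubYL P hP (hPne P hP).choose_spec
    have hDcard : D.card = bad.card := by
      rw [hD, Finset.card_image_of_injOn, Finset.card_attach]
      intro P _ Q _ hfe
      simp only at hfe
      exact Subtype.ext (cls_eq_of_common R (hform _ P.2) (hform _ Q.2)
        (hPne P.1 P.2).choose_spec (hfe ▸ (hPne Q.1 Q.2).choose_spec))
    have hDY : D ⊆ Y := hDsub.trans (Finset.sdiff_subset)
    have hind : lowerApprox R (Y \ D) ⊆ X := by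
      intro x hx
      have hclsI : cls R x ⊆ Y \ D := (mem_lowerApprox_iff R).1 hx
      by_cases hX : cls R x ⊆ X
      · exact hX (mem_cls_self R x)
      · exfalso
        have hclsYL : cls R x ⊆ Y \ L := by
          intro z hz
          have hzYD := hclsI hz
          rw [Finset.mem_sdiff] at hzYD ⊢
          refine ⟨hzYD.1, fun hzL => ?_⟩
          have : cls R z ⊆ X := (mem_lowerApprox_iff R).1 hzL
          exact hX ((cls_eq_of_mem R hz) ▸ this)
        have hbadmem : cls R x ∈ bad := by
          simp only [hbad, Finset.mem_filter, Finset.mem_image, Finset.mem_univ, true_and]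
          exact ⟨⟨x, rfl⟩, hclsYL⟩
        have hd : (hPne _ hbadmem).choose ∈ D := hDmem _ hbadmem
        have : (hPne _ hbadmem).choose ∈ Y \ D := hclsI (hPne _ hbadmem).choose_spec
        exact (Finset.mem_sdiff.1 this).2 hd
    unfold rank
    calc Y.card - bad.card = (Y \ D).card := by rw [Finset.card_sdiff_of_subset hDY, hDcard]
      _ ≤ _ := by
          apply Finset.le_sup (f := Finset.card)
          simp only [Finset.mem_filter, Finset.mem_powerset]
          exact ⟨Finset.sdiff_subset, hind⟩

end Helpers

open Classical in
theorem closure_of_parametric_matroid (R : Setoid α) [DecidableRel R.r] (X : Finset α) :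
    ∀ Y : Finset α,
      (Finset.univ.filter fun u =>
          rank (fun I => lowerApprox R I ⊆ X) Y
            = rank (fun I => lowerApprox R I ⊆ X) (insert u Y))
        = Y ∪ ((Finset.univ \ Y).filter fun y =>
            lowerNum R (insert y Y \ lowerApprox R X) - lowerNum R (Y \ lowerApprox R X) = 1) := by
  intro Y
  ext u
  simp only [Finset.mem_filter, Finset.mem_univ, true_and, Finset.mem_union, Finset.mem_sdiff]
  rw [rank_eq, rank_eq]
  by_cases hu : u ∈ Y
  · rw [Finset.insert_eq_self.2 hu]
    simp [hu]
  · have hcard : (insert u Y).card = Y.card + 1 := Finset.card_insert_of_notMem hu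
    set a := lowerNum R (Y \ lowerApprox R X) with ha
    set b := lowerNum R (insert u Y \ lowerApprox R X) with hb
    have hab : a ≤ b := lowerNum_mono R (Finset.sdiff_subset_sdiff (Finset.subset_insert u Y) (le_refl _))
    have hba : b ≤ a + 1 := by
      have h1 : insert u Y \ lowerApprox R X ⊆ insert u (Y \ lowerApprox R X) := by
        intro z hz
        rw [Finset.mem_sdiff, Finset.mem_insert] at hz
        rcases hz.1 with rfl | hzY
        · exact Finset.mem_insert_self _ _
        · exact Finset.mem_insert_of_mem (Finset.mem_sdiff.2 ⟨hzY, hz.2⟩)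
      calc b ≤ lowerNum R (insert u (Y \ lowerApprox R X)) := lowerNum_mono R h1
        _ ≤ a + 1 := lowerNum_insert_le R u _
    have haY : a ≤ Y.card := (lowerNum_le_card R _).trans (Finset.card_le_card Finset.sdiff_subset)
    rw [hcard]
    simp only [hu, false_or, not_false_iff, true_and]
    omega
end
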